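/- Given nonnegative coefficients (τ^M_L) satisfying the consistency relation and normalization τ^{{t}}_{{t}} = 1, the function on finite subsets defined by θ*(A) := ∑_{L ⊆ M : L ∩ A ≠ ∅} τ^M_L (for any finite M ⊇ A) is well-defined, i.e., independent of the choice of M containing A. -/
import Mathlib

private lemma thetaStar_step {T : Type*} [DecidableEq T] (τ : Finset T → Finset T → ℝ)
    (hcons : ∀ (M L : Finset T) (t : T), M.Nonempty → L.Nonempty → L ⊆ M → t ∉ M →
      τ M L = τ (insert t M) L + τ (insert t M) (insert t L))
    (A M : Finset T) (hA : A.Nonempty) (hAM : A ⊆ M) (t : T) (ht : t ∉ M) :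
    ∑ L ∈ M.powerset.filter (fun L => (L ∩ A).Nonempty), τ M L =
      ∑ L ∈ (insert t M).powerset.filter (fun L => (L ∩ A).Nonempty), τ (insert t M) L := by
  have htA : t ∉ A := fun h => ht (hAM h)
  rw [Finset.sum_filter, Finset.sum_filter, Finset.sum_powerset_insert ht]
  rw [← Finset.sum_add_distrib]
  apply Finset.sum_congr rfl
  intro L hL
  rw [Finset.mem_powerset] at hL
  have hins : insert t L ∩ A = L ∩ A := by
    ext x
    simp only [Finset.mem_inter, Finset.mem_insert]
    constructor
    · rintro ⟨(rfl | hx), hxA⟩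
      · exact absurd hxA htA
      · exact ⟨hx, hxA⟩
    · rintro ⟨hx, hxA⟩; exact ⟨Or.inr hx, hxA⟩
  rw [hins]
  by_cases h : (L ∩ A).Nonempty
  · simp only [h, if_true]
    have hLne : L.Nonempty := by
      obtain ⟨x, hx⟩ := h
      exact ⟨x, (Finset.mem_inter.mp hx).1⟩
    exact hcons M L t (hA.mono hAM) hLne hL ht
  · simp [h]

private lemma thetaStar_union {T : Type*} [DecidableEq T] (τ : Finset T → Finset T → ℝ)
    (hcons : ∀ (M L : Finset T) (t : T), M.Nonempty → L.Nonempty → L ⊆ M → t ∉ M →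
      τ M L = τ (insert t M) L + τ (insert t M) (insert t L))
    (A M : Finset T) (hA : A.Nonempty) (hAM : A ⊆ M) (N : Finset T) :
    ∑ L ∈ M.powerset.filter (fun L => (L ∩ A).Nonempty), τ M L =
      ∑ L ∈ (M ∪ N).powerset.filter (fun L => (L ∩ A).Nonempty), τ (M ∪ N) L := by
  induction N using Finset.induction_on with
  | empty => simp
  | @insert t N ht ih =>
    rw [Finset.union_insert]
    by_cases htMN : t ∈ M ∪ N
    · rw [Finset.insert_eq_self.mpr htMN]; exact ih
    · rw [ih]
      exact thetaStar_step τ hcons A (M ∪ N) hA (hAM.trans Finset.subset_union_left) t htMN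

/-- Given nonnegative coefficients `(τ^M_L)` satisfying the consistency relation
`τ^M_L = τ^{M∪{t}}_L + τ^{M∪{t}}_{L∪{t}}` (`t ∉ M`) and the normalization `τ^{{t}}_{{t}} = 1`,
the value `θ*(A) = ∑_{L ⊆ M, L ∩ A ≠ ∅} τ^M_L` does not depend on the choice of the finite
set `M` containing `A`. -/
theorem thetaStar_well_defined {T : Type*} [DecidableEq T] (τ : Finset T → Finset T → ℝ)
    (hnn : ∀ M L : Finset T, 0 ≤ τ M L)
    (hcons : ∀ (M L : Finset T) (t : T), M.Nonempty → L.Nonempty → L ⊆ M → t ∉ M →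
      τ M L = τ (insert t M) L + τ (insert t M) (insert t L))
    (hnorm : ∀ t : T, τ {t} {t} = 1)
    (A M₁ M₂ : Finset T) (hA : A.Nonempty) (h₁ : A ⊆ M₁) (h₂ : A ⊆ M₂) :
    ∑ L ∈ M₁.powerset.filter (fun L => (L ∩ A).Nonempty), τ M₁ L =
      ∑ L ∈ M₂.powerset.filter (fun L => (L ∩ A).Nonempty), τ M₂ L := by
  have e₁ := thetaStar_union τ hcons A M₁ hA h₁ M₂
  have e₂ := thetaStar_union τ hcons A M₂ hA h₂ M₁
  rw [Finset.union_comm M₂ M₁] at e₂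
  rw [e₁, e₂]
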